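/- Let f^N be defined by its Fourier transform f̂^N(ξ) = (δ/√N) Σ_{j=N}^{2N} [χ(ξ − 2^j e⃗) + χ(ξ + 2^j e⃗)], where χ is a smooth cutoff equal to 1 on |ξ| ≤ 1/4 and 0 on |ξ| ≥ 1/2, and e⃗ = (1,…,1). Then for 1 ≤ q ≤ ∞, ‖f^N‖_{FḂ⁰₁,q} ≤ C δ N^{1/q − 1/2}; in particular ‖f^N‖_{FḂ⁰₁,₂} ≤ Cδ and ‖f^N‖_{B⁰_{∞,q}} → 0 as N → ∞ when q > 2. -/

import Mathlib

open MeasureTheory Filter Complex RealInnerProductSpace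
open scoped ENNReal

noncomputable section

/-- `L¹` norm (in `ℝ≥0∞`) of the `j`-th homogeneous Littlewood–Paley block on the
frequency side. -/
def blockL1 (d : ℕ) (φ : EuclideanSpace ℝ (Fin d) → ℝ) (j : ℤ)
    (U : EuclideanSpace ℝ (Fin d) → ℝ) : ℝ≥0∞ :=
  ∫⁻ ξ, ENNReal.ofReal |φ ((2:ℝ)^(-j) • ξ) * U ξ|

/-- The homogeneous Fourier–Besov norm `‖·‖_{FḂ⁰_{1,q}}` computed on the frequency
side from `U = û`. -/
def FB0norm (d : ℕ) (φ : EuclideanSpace ℝ (Fin d) → ℝ) (q : ℝ)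
    (U : EuclideanSpace ℝ (Fin d) → ℝ) : ℝ≥0∞ :=
  (∑' j : ℤ, (blockL1 d φ j U) ^ q) ^ (1/q)

/-- `L^∞` norm (in `ℝ≥0∞`) of the `j`-th Littlewood–Paley block in physical space
(sup of the inverse Fourier integral of `φ(2^{-j}·) U`). -/
def blockSup (d : ℕ) (φ : EuclideanSpace ℝ (Fin d) → ℝ) (j : ℤ)
    (U : EuclideanSpace ℝ (Fin d) → ℝ) : ℝ≥0∞ :=
  ⨆ x : EuclideanSpace ℝ (Fin d),
    (‖∫ ξ, Complex.exp (Complex.I * ((⟪x, ξ⟫ : ℝ) : ℂ)) *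
        ((φ ((2:ℝ)^(-j) • ξ) * U ξ : ℝ) : ℂ)‖₊ : ℝ≥0∞)

/-- Besov-type `B⁰_{∞,q}` norm over high-frequency blocks, in `ℝ≥0∞`. -/
def Bsupnorm (d : ℕ) (φ : EuclideanSpace ℝ (Fin d) → ℝ) (q : ℝ)
    (U : EuclideanSpace ℝ (Fin d) → ℝ) : ℝ≥0∞ :=
  (∑' j : ℤ, (blockSup d φ j U) ^ q) ^ (1/q)

/-- The initial data `f^N`, given by its Fourier transform
`f̂^N(ξ) = (δ/√N) Σ_{j=N}^{2N} [χ(ξ − 2^j e⃗) + χ(ξ + 2^j e⃗)]`. -/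
def fNhat (d : ℕ) (χ : EuclideanSpace ℝ (Fin d) → ℝ) (e : EuclideanSpace ℝ (Fin d))
    (δ : ℝ) (N : ℕ) (ξ : EuclideanSpace ℝ (Fin d)) : ℝ :=
  (δ / Real.sqrt N) *
    ∑ j ∈ Finset.Icc N (2*N), (χ (ξ - (2:ℝ)^j • e) + χ (ξ + (2:ℝ)^j • e))

private lemma geom_aux {d : ℕ} (hd : 1 ≤ d)
    {φ χ : EuclideanSpace ℝ (Fin d) → ℝ}
    (hφ_supp : Function.support φ ⊆
      {ξ : EuclideanSpace ℝ (Fin d) | 3/4 ≤ ‖ξ‖ ∧ ‖ξ‖ ≤ 8/3})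
    (hχ_supp : Function.support χ ⊆ Metric.closedBall 0 (1/2))
    {e : EuclideanSpace ℝ (Fin d)} (he : ∀ i, e i = 1)
    {k : ℤ} {j : ℕ} (hj : 1 ≤ j)
    {ξ : EuclideanSpace ℝ (Fin d)}
    (hφ : φ ((2:ℝ)^(-k) • ξ) ≠ 0)
    (hχ : χ (ξ - (2:ℝ)^j • e) ≠ 0 ∨ χ (ξ + (2:ℝ)^j • e) ≠ 0) :
    (3/5 : ℝ) * 2^k ≤ 2^j * Real.sqrt d ∧ (2:ℝ)^j * Real.sqrt d ≤ (32/9) * 2^k := by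
  have h2k : (0:ℝ) < 2^k := zpow_pos (by norm_num) k
  have hmem := hφ_supp (Function.mem_support.2 hφ)
  have hnorm : ‖(2:ℝ)^(-k) • ξ‖ = ((2:ℝ)^k)⁻¹ * ‖ξ‖ := by
    rw [norm_smul, Real.norm_eq_abs, abs_of_pos (zpow_pos (by norm_num) _), zpow_neg]
  obtain ⟨h1, h2⟩ := hmem
  rw [hnorm] at h1 h2
  have hξ1 : 3/4 * 2^k ≤ ‖ξ‖ := by
    rw [inv_mul_eq_div, le_div_iff₀ h2k] at h1; linarith
  have hξ2 : ‖ξ‖ ≤ 8/3 * 2^k := by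
    rw [inv_mul_eq_div, div_le_iff₀ h2k] at h2; linarith
  have hne : ‖(2:ℝ)^j • e‖ = 2^j * Real.sqrt d := by
    rw [norm_smul, Real.norm_eq_abs, abs_of_pos (by positivity)]
    congr 1
    rw [EuclideanSpace.norm_eq]
    congr 1
    simp [he]
  have hdist : |‖ξ‖ - 2^j * Real.sqrt d| ≤ 1/2 := by
    rcases hχ with h | h
    · have hb := hχ_supp (Function.mem_support.2 h)
      rw [Metric.mem_closedBall, dist_zero_right] at hb
      calc |‖ξ‖ - 2^j * Real.sqrt d| = |‖ξ‖ - ‖(2:ℝ)^j • e‖| := by rw [hne]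
        _ ≤ ‖ξ - (2:ℝ)^j • e‖ := abs_norm_sub_norm_le _ _
        _ ≤ 1/2 := hb
    · have hb := hχ_supp (Function.mem_support.2 h)
      rw [Metric.mem_closedBall, dist_zero_right] at hb
      calc |‖ξ‖ - 2^j * Real.sqrt d| = |‖ξ‖ - ‖-((2:ℝ)^j • e)‖| := by rw [norm_neg, hne]
        _ ≤ ‖ξ - -((2:ℝ)^j • e)‖ := abs_norm_sub_norm_le _ _
        _ ≤ 1/2 := by rw [sub_neg_eq_add]; exact hb
  have hs1 : 1 ≤ Real.sqrt d := Real.one_le_sqrt.2 (by exact_mod_cast hd)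
  have h2j : (2:ℝ) ≤ 2^j := by
    calc (2:ℝ) = 2^1 := (pow_one 2).symm
    _ ≤ 2^j := pow_le_pow_right₀ (by norm_num) hj
  have ht : (2:ℝ) ≤ 2^j * Real.sqrt d := by nlinarith
  rw [abs_le] at hdist
  constructor <;> nlinarith

private def Pk {d : ℕ} (φ χ : EuclideanSpace ℝ (Fin d) → ℝ)
    (e : EuclideanSpace ℝ (Fin d)) (k : ℤ) (j : ℕ) : Prop :=
  ∃ ξ, φ ((2:ℝ)^(-k) • ξ) ≠ 0 ∧ (χ (ξ - (2:ℝ)^j • e) ≠ 0 ∨ χ (ξ + (2:ℝ)^j • e) ≠ 0)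

open scoped Classical in
private noncomputable def Jk {d : ℕ} (φ χ : EuclideanSpace ℝ (Fin d) → ℝ)
    (e : EuclideanSpace ℝ (Fin d)) (N : ℕ) (k : ℤ) : Finset ℕ :=
  (Finset.Icc N (2*N)).filter (Pk φ χ e k)

open scoped Classical in
private lemma mem_Jk {d : ℕ} {φ χ : EuclideanSpace ℝ (Fin d) → ℝ}
    {e : EuclideanSpace ℝ (Fin d)} {N : ℕ} {k : ℤ} {j : ℕ} :
    j ∈ Jk φ χ e N k ↔ j ∈ Finset.Icc N (2*N) ∧ Pk φ χ e k j := by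
  rw [Jk, Finset.mem_filter]

private lemma card_Jk_le {d : ℕ} (hd : 1 ≤ d)
    {φ χ : EuclideanSpace ℝ (Fin d) → ℝ}
    (hφ_supp : Function.support φ ⊆
      {ξ : EuclideanSpace ℝ (Fin d) | 3/4 ≤ ‖ξ‖ ∧ ‖ξ‖ ≤ 8/3})
    (hχ_supp : Function.support χ ⊆ Metric.closedBall 0 (1/2))
    {e : EuclideanSpace ℝ (Fin d)} (he : ∀ i, e i = 1)
    {N : ℕ} (hN : 1 ≤ N) (k : ℤ) : (Jk φ χ e N k).card ≤ 3 := by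
  classical
  by_cases hne : (Jk φ χ e N k).Nonempty
  · set m := (Jk φ χ e N k).min' hne with hm
    have hmmem : m ∈ Jk φ χ e N k := (Jk φ χ e N k).min'_mem hne
    have key : ∀ j ∈ Jk φ χ e N k, j ≤ m + 2 := by
      intro j hj
      have hjm := mem_Jk.1 hj
      have hmm := mem_Jk.1 hmmem
      obtain ⟨ξ, hφj, hχj⟩ := hjm.2
      obtain ⟨ξ', hφm, hχm⟩ := hmm.2
      have hj1 : 1 ≤ j := le_trans hN (Finset.mem_Icc.1 hjm.1).1
      have hm1 : 1 ≤ m := le_trans hN (Finset.mem_Icc.1 hmm.1).1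
      have Hj := geom_aux hd hφ_supp hχ_supp he hj1 hφj hχj
      have Hm := geom_aux hd hφ_supp hχ_supp he hm1 hφm hχm
      have hs : 0 < Real.sqrt d := Real.sqrt_pos.2 (by exact_mod_cast hd)
      have h2k : (0:ℝ) < 2^k := zpow_pos (by norm_num) k
      have h8 : (2:ℝ)^j * Real.sqrt d < 2^(m+3) * Real.sqrt d := by
        have hpm : (2:ℝ)^(m+3) = 2^m * 8 := by rw [pow_add]; norm_num
        rw [hpm]
        nlinarith [Hj.2, Hm.1]
      have hlt : (2:ℝ)^j < 2^(m+3) := lt_of_mul_lt_mul_right h8 hs.le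
      have := (pow_lt_pow_iff_right₀ (by norm_num : (1:ℝ) < 2)).1 hlt
      omega
    have hsub : Jk φ χ e N k ⊆ Finset.Icc m (m+2) := fun j hj =>
      Finset.mem_Icc.2 ⟨(Jk φ χ e N k).min'_le j hj, key j hj⟩
    calc (Jk φ χ e N k).card ≤ (Finset.Icc m (m+2)).card := Finset.card_le_card hsub
      _ = 3 := by rw [Nat.card_Icc]; omega
  · rw [Finset.not_nonempty_iff_eq_empty] at hne
    rw [hne]; simp

private lemma k_mem_of_ne {d : ℕ} (hd : 1 ≤ d)
    {φ χ : EuclideanSpace ℝ (Fin d) → ℝ}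
    (hφ_supp : Function.support φ ⊆
      {ξ : EuclideanSpace ℝ (Fin d) | 3/4 ≤ ‖ξ‖ ∧ ‖ξ‖ ≤ 8/3})
    (hχ_supp : Function.support χ ⊆ Metric.closedBall 0 (1/2))
    {e : EuclideanSpace ℝ (Fin d)} (he : ∀ i, e i = 1)
    {δ : ℝ} {N : ℕ} (hN : 1 ≤ N) {k : ℤ} {ξ : EuclideanSpace ℝ (Fin d)}
    (hne : φ ((2:ℝ)^(-k) • ξ) * fNhat d χ e δ N ξ ≠ 0) :
    k ∈ Finset.Icc ((N:ℤ) - 1) (2*N + d) := by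
  have hφ0 := left_ne_zero_of_mul hne
  have hU0 := right_ne_zero_of_mul hne
  have hsum : (∑ j ∈ Finset.Icc N (2*N),
      (χ (ξ - (2:ℝ)^j • e) + χ (ξ + (2:ℝ)^j • e))) ≠ 0 := by
    intro h
    apply hU0
    rw [fNhat, h, mul_zero]
  obtain ⟨j, hjmem, hjne⟩ := Finset.exists_ne_zero_of_sum_ne_zero hsum
  have hχor : χ (ξ - (2:ℝ)^j • e) ≠ 0 ∨ χ (ξ + (2:ℝ)^j • e) ≠ 0 := by
    by_contra h
    push_neg at h
    exact hjne (by rw [h.1, h.2, add_zero])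
  have hjN := Finset.mem_Icc.1 hjmem
  have H := geom_aux hd hφ_supp hχ_supp he (le_trans hN hjN.1) hφ0 hχor
  have hs1 : 1 ≤ Real.sqrt d := Real.one_le_sqrt.2 (by exact_mod_cast hd)
  have hsd : Real.sqrt d ≤ 2^d := by
    have h2 : (d:ℝ) < 2^d := by exact_mod_cast (Nat.lt_two_pow_self (n := d))
    have h3 : (1:ℝ) ≤ 2^d := one_le_pow₀ (by norm_num)
    have h1 : (d:ℝ) ≤ ((2:ℝ)^d)^2 := by nlinarith
    calc Real.sqrt d ≤ Real.sqrt (((2:ℝ)^d)^2) := Real.sqrt_le_sqrt h1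
      _ = 2^d := Real.sqrt_sq (by positivity)
  have h2k : (0:ℝ) < 2^k := zpow_pos (by norm_num) k
  have hku : k < 2*(N:ℤ) + d + 1 := by
    rw [← zpow_lt_zpow_iff_right₀ (by norm_num : (1:ℝ) < 2)]
    have hcast : (2:ℝ)^(2*(N:ℤ) + d + 1) = 2^(2*N + d + 1 : ℕ) := by
      have hh : ((2*N + d + 1 : ℕ) : ℤ) = 2*(N:ℤ) + d + 1 := by push_cast; ring
      rw [← hh, zpow_natCast]
    rw [hcast]
    have h2j : (2:ℝ)^j ≤ 2^(2*N) := pow_le_pow_right₀ (by norm_num) hjN.2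
    have hE : (2:ℝ)^(2*N + d + 1 : ℕ) = 2 * (2^(2*N) * 2^d) := by
      rw [pow_add, pow_add, pow_one]; ring
    have e1 : (2:ℝ)^j * Real.sqrt d ≤ 2^(2*N) * 2^d :=
      mul_le_mul h2j hsd (Real.sqrt_nonneg _) (by positivity)
    have hpos : (0:ℝ) < 2^(2*N) * 2^d := by positivity
    rw [hE]
    nlinarith [H.1]
  have hkl : (N:ℤ) - 2 < k := by
    rw [← zpow_lt_zpow_iff_right₀ (by norm_num : (1:ℝ) < 2)]
    have hcast : (2:ℝ)^((N:ℤ) - 2) = 2^N / 4 := by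
      rw [zpow_sub₀ (by norm_num : (2:ℝ) ≠ 0), zpow_natCast]
      norm_num
    rw [hcast]
    have h2j : (2:ℝ)^N ≤ 2^j := pow_le_pow_right₀ (by norm_num) hjN.1
    have hp : (0:ℝ) < 2^N := by positivity
    nlinarith [H.2]
  rw [Finset.mem_Icc]
  omega

private lemma block_bound {d : ℕ}
    {φ χ : EuclideanSpace ℝ (Fin d) → ℝ}
    (hφ_range : ∀ ξ, φ ξ ∈ Set.Icc (0:ℝ) 1)
    (hχ_cont : Continuous χ)
    (hχ_range : ∀ ξ, χ ξ ∈ Set.Icc (0:ℝ) 1)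
    {e : EuclideanSpace ℝ (Fin d)} {δ : ℝ} (hδ : 0 ≤ δ) (N : ℕ) (k : ℤ) :
    blockL1 d φ k (fNhat d χ e δ N) ≤
      ENNReal.ofReal (δ / Real.sqrt N) * (Jk φ χ e N k).card *
        (2 * ∫⁻ ξ, ENNReal.ofReal (χ ξ)) := by
  classical
  have hc : 0 ≤ δ / Real.sqrt N := by positivity
  have hχ0 : ∀ ξ, 0 ≤ χ ξ := fun ξ => (hχ_range ξ).1
  have hmeas : ∀ j : ℕ, Measurable (fun ξ : EuclideanSpace ℝ (Fin d) =>
      ENNReal.ofReal (χ (ξ - (2:ℝ)^j • e))) := fun j =>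
    ((hχ_cont.comp (continuous_id.sub continuous_const)).measurable).ennreal_ofReal
  have hmeas' : ∀ j : ℕ, Measurable (fun ξ : EuclideanSpace ℝ (Fin d) =>
      ENNReal.ofReal (χ (ξ + (2:ℝ)^j • e))) := fun j =>
    ((hχ_cont.comp (continuous_id.add continuous_const)).measurable).ennreal_ofReal
  have hpt : ∀ ξ, ENNReal.ofReal |φ ((2:ℝ)^(-k) • ξ) * fNhat d χ e δ N ξ| ≤
      ENNReal.ofReal (δ / Real.sqrt N *
        ∑ j ∈ Jk φ χ e N k, (χ (ξ - (2:ℝ)^j • e) + χ (ξ + (2:ℝ)^j • e))) := by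
    intro ξ
    apply ENNReal.ofReal_le_ofReal
    have hsum_nonneg : 0 ≤ ∑ j ∈ Finset.Icc N (2*N),
        (χ (ξ - (2:ℝ)^j • e) + χ (ξ + (2:ℝ)^j • e)) :=
      Finset.sum_nonneg fun j _ => add_nonneg (hχ0 _) (hχ0 _)
    have hUnn : 0 ≤ fNhat d χ e δ N ξ := mul_nonneg hc hsum_nonneg
    rw [_root_.abs_of_nonneg (mul_nonneg (hφ_range _).1 hUnn), fNhat, mul_left_comm]
    refine mul_le_mul_of_nonneg_left ?_ hc
    rw [Finset.mul_sum, Jk]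
    rw [← Finset.sum_filter_add_sum_filter_not (Finset.Icc N (2*N)) (Pk φ χ e k)
      (fun j => φ ((2:ℝ)^(-k) • ξ) * (χ (ξ - (2:ℝ)^j • e) + χ (ξ + (2:ℝ)^j • e)))]
    have hzero : ∑ j ∈ (Finset.Icc N (2*N)).filter (fun j => ¬ Pk φ χ e k j),
        φ ((2:ℝ)^(-k) • ξ) * (χ (ξ - (2:ℝ)^j • e) + χ (ξ + (2:ℝ)^j • e)) = 0 := by
      refine Finset.sum_eq_zero fun j hj => ?_
      have hnP := (Finset.mem_filter.1 hj).2
      by_cases hφ0 : φ ((2:ℝ)^(-k) • ξ) = 0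
      · rw [hφ0, zero_mul]
      · have h1 : χ (ξ - (2:ℝ)^j • e) = 0 := by
          by_contra h; exact hnP ⟨ξ, hφ0, Or.inl h⟩
        have h2 : χ (ξ + (2:ℝ)^j • e) = 0 := by
          by_contra h; exact hnP ⟨ξ, hφ0, Or.inr h⟩
        rw [h1, h2, add_zero, mul_zero]
    rw [hzero, add_zero]
    refine Finset.sum_le_sum fun j _ => ?_
    exact mul_le_of_le_one_left (add_nonneg (hχ0 _) (hχ0 _)) (hφ_range _).2
  calc blockL1 d φ k (fNhat d χ e δ N)
      ≤ ∫⁻ ξ, ENNReal.ofReal (δ / Real.sqrt N *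
          ∑ j ∈ Jk φ χ e N k, (χ (ξ - (2:ℝ)^j • e) + χ (ξ + (2:ℝ)^j • e))) :=
        lintegral_mono hpt
    _ = ENNReal.ofReal (δ / Real.sqrt N) *
        ∫⁻ ξ, ENNReal.ofReal (∑ j ∈ Jk φ χ e N k,
          (χ (ξ - (2:ℝ)^j • e) + χ (ξ + (2:ℝ)^j • e))) := by
        simp_rw [ENNReal.ofReal_mul hc]
        rw [lintegral_const_mul]
        exact Measurable.ennreal_ofReal (Finset.measurable_sum _ fun j _ =>
          ((hχ_cont.comp (continuous_id.sub continuous_const)).add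
            (hχ_cont.comp (continuous_id.add continuous_const))).measurable)
    _ = ENNReal.ofReal (δ / Real.sqrt N) * ∑ j ∈ Jk φ χ e N k,
        ((∫⁻ ξ, ENNReal.ofReal (χ (ξ - (2:ℝ)^j • e))) +
          ∫⁻ ξ, ENNReal.ofReal (χ (ξ + (2:ℝ)^j • e))) := by
        congr 1
        have hsplit : ∀ ξ : EuclideanSpace ℝ (Fin d),
            ENNReal.ofReal (∑ j ∈ Jk φ χ e N k,
              (χ (ξ - (2:ℝ)^j • e) + χ (ξ + (2:ℝ)^j • e)))
            = ∑ j ∈ Jk φ χ e N k, (ENNReal.ofReal (χ (ξ - (2:ℝ)^j • e)) +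
                ENNReal.ofReal (χ (ξ + (2:ℝ)^j • e))) := by
          intro ξ
          rw [ENNReal.ofReal_sum_of_nonneg (fun j _ => add_nonneg (hχ0 _) (hχ0 _))]
          exact Finset.sum_congr rfl fun j _ => ENNReal.ofReal_add (hχ0 _) (hχ0 _)
        simp_rw [hsplit]
        rw [lintegral_finset_sum]
        · exact Finset.sum_congr rfl fun j _ => lintegral_add_left (hmeas j) _
        · exact fun j _ => (hmeas j).add (hmeas' j)
    _ = ENNReal.ofReal (δ / Real.sqrt N) * ∑ j ∈ Jk φ χ e N k,
        (2 * ∫⁻ ξ, ENNReal.ofReal (χ ξ)) := by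
        congr 1
        refine Finset.sum_congr rfl fun j _ => ?_
        have h1 : (∫⁻ ξ, ENNReal.ofReal (χ (ξ - (2:ℝ)^j • e)))
            = ∫⁻ ξ, ENNReal.ofReal (χ ξ) := by
          simpa [sub_eq_add_neg] using lintegral_add_right_eq_self
            (μ := (volume : Measure (EuclideanSpace ℝ (Fin d))))
            (fun ξ => ENNReal.ofReal (χ ξ)) (-((2:ℝ)^j • e))
        have h2 : (∫⁻ ξ, ENNReal.ofReal (χ (ξ + (2:ℝ)^j • e)))
            = ∫⁻ ξ, ENNReal.ofReal (χ ξ) :=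
          lintegral_add_right_eq_self
            (μ := (volume : Measure (EuclideanSpace ℝ (Fin d))))
            (fun ξ => ENNReal.ofReal (χ ξ)) _
        rw [h1, h2, two_mul]
    _ = ENNReal.ofReal (δ / Real.sqrt N) * (Jk φ χ e N k).card *
        (2 * ∫⁻ ξ, ENNReal.ofReal (χ ξ)) := by
        rw [Finset.sum_const, nsmul_eq_mul, mul_assoc]

private lemma FB_bound {d : ℕ} (hd : 1 ≤ d)
    {φ χ : EuclideanSpace ℝ (Fin d) → ℝ}
    (hφ_range : ∀ ξ, φ ξ ∈ Set.Icc (0:ℝ) 1)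
    (hφ_supp : Function.support φ ⊆
      {ξ : EuclideanSpace ℝ (Fin d) | 3/4 ≤ ‖ξ‖ ∧ ‖ξ‖ ≤ 8/3})
    (hχ_cont : Continuous χ)
    (hχ_range : ∀ ξ, χ ξ ∈ Set.Icc (0:ℝ) 1)
    (hχ_supp : Function.support χ ⊆ Metric.closedBall 0 (1/2))
    {e : EuclideanSpace ℝ (Fin d)} (he : ∀ i, e i = 1)
    {δ : ℝ} (hδ : 0 < δ) {q : ℝ} (hq : 1 ≤ q) {N : ℕ} (hN : 1 ≤ N) :
    FB0norm d φ q (fNhat d χ e δ N) ≤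
      ENNReal.ofReal (6 * ((∫⁻ ξ, ENNReal.ofReal (χ ξ)).toReal + 1) * 2^(d+2) * δ *
        (N:ℝ) ^ (1/q - 1/2)) := by
  classical
  set I₀ := ∫⁻ ξ, ENNReal.ofReal (χ ξ) with hI₀def
  set B : ℝ := I₀.toReal + 1 with hBdef
  have hχ0 : ∀ ξ, 0 ≤ χ ξ := fun ξ => (hχ_range ξ).1
  have hI₀fin : I₀ ≠ ⊤ := by
    have hle : I₀ ≤
        ∫⁻ ξ, (Metric.closedBall (0:EuclideanSpace ℝ (Fin d)) (1/2)).indicator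
          (fun _ => (1:ℝ≥0∞)) ξ := by
      refine lintegral_mono fun ξ => ?_
      by_cases h : ξ ∈ Metric.closedBall (0:EuclideanSpace ℝ (Fin d)) (1/2)
      · simp only [Set.indicator_of_mem h]
        exact ENNReal.ofReal_le_one.2 (hχ_range ξ).2
      · have hz : χ ξ = 0 := by
          by_contra hne
          exact h (hχ_supp (Function.mem_support.2 hne))
        simp [hz, Set.indicator_of_notMem h]
    refine ne_of_lt (lt_of_le_of_lt hle ?_)
    rw [show (fun _ : EuclideanSpace ℝ (Fin d) => (1:ℝ≥0∞)) =
        (1 : EuclideanSpace ℝ (Fin d) → ℝ≥0∞) from rfl,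
      lintegral_indicator_one measurableSet_closedBall]
    exact measure_closedBall_lt_top
  have hB0 : 0 < B := by positivity
  have hIB : I₀ ≤ ENNReal.ofReal B := by
    rw [hBdef]
    calc I₀ = ENNReal.ofReal I₀.toReal := (ENNReal.ofReal_toReal hI₀fin).symm
      _ ≤ _ := ENNReal.ofReal_le_ofReal (by linarith)
  have hq0 : 0 < q := lt_of_lt_of_le one_pos hq
  have hinvq : (0:ℝ) ≤ 1/q := by positivity
  set A : ℝ := δ / Real.sqrt N * 3 * (2 * B) with hAdef
  have hA0 : 0 ≤ A := by positivity
  have hblock : ∀ k : ℤ, blockL1 d φ k (fNhat d χ e δ N) ≤ ENNReal.ofReal A := by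
    intro k
    refine le_trans (block_bound hφ_range hχ_cont hχ_range hδ.le N k) ?_
    calc ENNReal.ofReal (δ / Real.sqrt N) * (Jk φ χ e N k).card * (2 * I₀)
        ≤ ENNReal.ofReal (δ / Real.sqrt N) * 3 * (2 * ENNReal.ofReal B) := by
          refine mul_le_mul' (mul_le_mul' le_rfl ?_) (mul_le_mul' le_rfl hIB)
          exact_mod_cast card_Jk_le hd hφ_supp hχ_supp he hN k
      _ = ENNReal.ofReal A := by
          rw [hAdef, ENNReal.ofReal_mul (by positivity : (0:ℝ) ≤ δ / Real.sqrt N * 3),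
            ENNReal.ofReal_mul (by positivity : (0:ℝ) ≤ δ / Real.sqrt N),
            ENNReal.ofReal_mul (by norm_num : (0:ℝ) ≤ 2)]
          norm_num
  set S : Finset ℤ := Finset.Icc ((N:ℤ) - 1) (2*N + d) with hSdef
  have hzero : ∀ k : ℤ, k ∉ S → blockL1 d φ k (fNhat d χ e δ N) = 0 := by
    intro k hk
    have hpt : ∀ ξ, ENNReal.ofReal |φ ((2:ℝ)^(-k) • ξ) * fNhat d χ e δ N ξ| = 0 := by
      intro ξ
      have hz : φ ((2:ℝ)^(-k) • ξ) * fNhat d χ e δ N ξ = 0 := by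
        by_contra h
        exact hk (k_mem_of_ne hd hφ_supp hχ_supp he hN h)
      rw [hz, abs_zero, ENNReal.ofReal_zero]
    show (∫⁻ ξ, ENNReal.ofReal |φ ((2:ℝ)^(-k) • ξ) * fNhat d χ e δ N ξ|) = 0
    simp_rw [hpt]
    exact lintegral_zero
  have htsum : (∑' k : ℤ, (blockL1 d φ k (fNhat d χ e δ N))^q)
      = ∑ k ∈ S, (blockL1 d φ k (fNhat d χ e δ N))^q :=
    tsum_eq_sum (fun k hk => by rw [hzero k hk, ENNReal.zero_rpow_of_pos hq0])
  have hsum_le : ∑ k ∈ S, (blockL1 d φ k (fNhat d χ e δ N))^q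
      ≤ (S.card : ℝ≥0∞) * (ENNReal.ofReal A)^q := by
    calc ∑ k ∈ S, (blockL1 d φ k (fNhat d χ e δ N))^q
        ≤ ∑ _k ∈ S, (ENNReal.ofReal A)^q :=
          Finset.sum_le_sum fun k _ => ENNReal.rpow_le_rpow (hblock k) hq0.le
      _ = (S.card : ℝ≥0∞) * (ENNReal.ofReal A)^q := by
          rw [Finset.sum_const, nsmul_eq_mul]
  have hScard : (S.card : ℝ) ≤ 2^(d+2) * N := by
    have h1 : S.card = N + d + 2 := by
      rw [hSdef, Int.card_Icc]
      omega
    rw [h1]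
    have h2' : (d + 3 : ℕ) ≤ 2^(d+2) := by
      have := Nat.lt_two_pow_self (n := d+2)
      omega
    have h2 : (d:ℝ) + 3 ≤ 2^(d+2) := by exact_mod_cast h2'
    have hN1 : (1:ℝ) ≤ N := by exact_mod_cast hN
    push_cast
    nlinarith
  have key : FB0norm d φ q (fNhat d χ e δ N) ≤
      (ENNReal.ofReal (2^(d+2) * N))^(1/q) * ENNReal.ofReal A := by
    rw [FB0norm, htsum]
    calc (∑ k ∈ S, (blockL1 d φ k (fNhat d χ e δ N))^q)^(1/q)
        ≤ ((S.card : ℝ≥0∞) * (ENNReal.ofReal A)^q)^(1/q) :=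
          ENNReal.rpow_le_rpow hsum_le hinvq
      _ = (S.card : ℝ≥0∞)^(1/q) * ((ENNReal.ofReal A)^q)^(1/q) :=
          ENNReal.mul_rpow_of_nonneg _ _ hinvq
      _ = (S.card : ℝ≥0∞)^(1/q) * ENNReal.ofReal A := by
          rw [← ENNReal.rpow_mul, mul_one_div_cancel hq0.ne', ENNReal.rpow_one]
      _ ≤ (ENNReal.ofReal (2^(d+2) * N))^(1/q) * ENNReal.ofReal A := by
          refine mul_le_mul_left (ENNReal.rpow_le_rpow ?_ hinvq) _
          rw [← ENNReal.ofReal_natCast]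
          exact ENNReal.ofReal_le_ofReal hScard
  refine key.trans ?_
  rw [ENNReal.ofReal_rpow_of_nonneg (by positivity) hinvq,
    ← ENNReal.ofReal_mul (by positivity)]
  apply ENNReal.ofReal_le_ofReal
  have hsq : Real.sqrt N = (N:ℝ)^((1:ℝ)/2) := Real.sqrt_eq_rpow _
  have hNpos : (0:ℝ) < N := by exact_mod_cast hN
  have e1 : ((2:ℝ)^(d+2) * N)^(1/q) ≤ 2^(d+2) * (N:ℝ)^(1/q) := by
    rw [Real.mul_rpow (by positivity) (Nat.cast_nonneg N)]
    refine mul_le_mul_of_nonneg_right ?_ (Real.rpow_nonneg (Nat.cast_nonneg N) _)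
    calc ((2:ℝ)^(d+2))^(1/q) ≤ ((2:ℝ)^(d+2))^(1:ℝ) :=
        Real.rpow_le_rpow_of_exponent_le (one_le_pow₀ (by norm_num))
          (by rw [div_le_one (by linarith)]; linarith)
      _ = 2^(d+2) := Real.rpow_one _
  have e3 : (N:ℝ)^(1/q) * (N:ℝ)^(-(1/2):ℝ) = (N:ℝ)^(1/q - 1/2) := by
    rw [← Real.rpow_add hNpos, ← sub_eq_add_neg]
  calc ((2:ℝ)^(d+2) * N)^(1/q) * A ≤ (2^(d+2) * (N:ℝ)^(1/q)) * A :=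
      mul_le_mul_of_nonneg_right e1 hA0
    _ = 6 * B * 2^(d+2) * δ * ((N:ℝ)^(1/q) * (N:ℝ)^(-(1/2):ℝ)) := by
      rw [hAdef, hsq, Real.rpow_neg (Nat.cast_nonneg N), div_eq_mul_inv]
      ring
    _ = 6 * B * 2^(d+2) * δ * (N:ℝ)^(1/q - 1/2) := by rw [e3]
private lemma blockSup_le_blockL1 (d : ℕ) (φ : EuclideanSpace ℝ (Fin d) → ℝ) (k : ℤ)
    (U : EuclideanSpace ℝ (Fin d) → ℝ) : blockSup d φ k U ≤ blockL1 d φ k U := by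
  refine iSup_le fun x => ?_
  calc (‖∫ ξ, Complex.exp (Complex.I * ((⟪x, ξ⟫ : ℝ) : ℂ)) *
          ((φ ((2:ℝ)^(-k) • ξ) * U ξ : ℝ) : ℂ)‖₊ : ℝ≥0∞)
      ≤ ∫⁻ ξ, ‖Complex.exp (Complex.I * ((⟪x, ξ⟫ : ℝ) : ℂ)) *
          ((φ ((2:ℝ)^(-k) • ξ) * U ξ : ℝ) : ℂ)‖₊ :=
        enorm_integral_le_lintegral_enorm _
    _ = blockL1 d φ k U := by
        show _ = ∫⁻ ξ, ENNReal.ofReal |φ ((2:ℝ)^(-k) • ξ) * U ξ|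
        refine lintegral_congr fun ξ => ?_
        rw [nnnorm_mul]
        have hexp : ‖Complex.exp (Complex.I * ((⟪x, ξ⟫ : ℝ) : ℂ))‖₊ = 1 := by
          apply NNReal.coe_injective
          rw [coe_nnnorm, Complex.norm_exp]
          simp
        rw [hexp, one_mul, ← Real.enorm_eq_ofReal_abs]
        congr 1
        apply NNReal.coe_injective
        simp only [coe_nnnorm]
        exact Complex.norm_real _

/-- for `f^N` as above, `‖f^N‖_{FḂ⁰_{1,q}} ≤ C δ N^{1/q − 1/2}` for all
`1 ≤ q < ∞`; in particular `‖f^N‖_{FḂ⁰_{1,2}} ≤ C δ` and the (Fourier-side)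
`B⁰_{∞,q}` norm of `f^N` tends to `0` as `N → ∞` when `q > 2`. -/
theorem stmt7 (d : ℕ) (hd : 1 ≤ d)
    (φ : EuclideanSpace ℝ (Fin d) → ℝ)
    (hφ_range : ∀ ξ, φ ξ ∈ Set.Icc (0:ℝ) 1)
    (hφ_supp : Function.support φ ⊆
      {ξ : EuclideanSpace ℝ (Fin d) | 3/4 ≤ ‖ξ‖ ∧ ‖ξ‖ ≤ 8/3})
    (hφ_sum : ∀ ξ : EuclideanSpace ℝ (Fin d), ξ ≠ 0 →
      (∑' j : ℤ, φ ((2:ℝ)^(-j) • ξ)) = 1)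
    (χ : EuclideanSpace ℝ (Fin d) → ℝ) (hχ_cont : Continuous χ)
    (hχ_range : ∀ ξ, χ ξ ∈ Set.Icc (0:ℝ) 1)
    (hχ_supp : Function.support χ ⊆ Metric.closedBall 0 (1/2))
    (e : EuclideanSpace ℝ (Fin d)) (he : ∀ i, e i = 1) :
    ∃ C : ℝ, 0 < C ∧ ∀ (δ : ℝ), 0 < δ →
      (∀ (q : ℝ), 1 ≤ q → ∀ (N : ℕ), 1 ≤ N →
        FB0norm d φ q (fNhat d χ e δ N) ≤
          ENNReal.ofReal (C * δ * (N:ℝ) ^ (1/q - 1/2))) ∧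
      (∀ (N : ℕ), 1 ≤ N →
        FB0norm d φ 2 (fNhat d χ e δ N) ≤ ENNReal.ofReal (C * δ)) ∧
      (∀ (q : ℝ), 2 < q →
        Tendsto (fun N : ℕ => Bsupnorm d φ q (fNhat d χ e δ N)) atTop (nhds 0)) := by
  classical
  set I₀ := ∫⁻ ξ, ENNReal.ofReal (χ ξ) with hI₀
  refine ⟨6 * (I₀.toReal + 1) * 2^(d+2), by positivity, fun δ hδ => ?_⟩
  have main : ∀ q : ℝ, 1 ≤ q → ∀ N : ℕ, 1 ≤ N → FB0norm d φ q (fNhat d χ e δ N) ≤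
      ENNReal.ofReal (6 * (I₀.toReal + 1) * 2^(d+2) * δ * (N:ℝ)^(1/q - 1/2)) :=
    fun q hq N hN => FB_bound hd hφ_range hφ_supp hχ_cont hχ_range hχ_supp he hδ hq hN
  refine ⟨main, ?_, ?_⟩
  · intro N hN
    have h := main 2 (by norm_num) N hN
    have h0 : (1/(2:ℝ) - 1/2) = 0 := by norm_num
    rwa [h0, Real.rpow_zero, mul_one] at h
  · intro q hq
    have hq1 : 1 ≤ q := by linarith
    have hq0 : 0 < q := by linarith
    have hBF : ∀ N : ℕ, Bsupnorm d φ q (fNhat d χ e δ N) ≤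
        FB0norm d φ q (fNhat d χ e δ N) := by
      intro N
      rw [Bsupnorm, FB0norm]
      exact ENNReal.rpow_le_rpow (ENNReal.tsum_le_tsum fun k =>
        ENNReal.rpow_le_rpow (blockSup_le_blockL1 d φ k _) hq0.le) (by positivity)
    have hub : ∀ᶠ N : ℕ in atTop, Bsupnorm d φ q (fNhat d χ e δ N) ≤
        ENNReal.ofReal (6 * (I₀.toReal + 1) * 2^(d+2) * δ * (N:ℝ)^(1/q - 1/2)) := by
      filter_upwards [eventually_ge_atTop 1] with N hN
      exact (hBF N).trans (main q hq1 N hN)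
    have hg : Tendsto (fun N : ℕ =>
        ENNReal.ofReal (6 * (I₀.toReal + 1) * 2^(d+2) * δ * (N:ℝ)^(1/q - 1/2)))
        atTop (nhds 0) := by
      have hexp : (0:ℝ) < 1/2 - 1/q := by
        have h12 : 1/q < 1/2 := by
          rw [div_lt_div_iff₀ (by linarith) (by norm_num)]
          linarith
        linarith
      have h1 : Tendsto (fun x : ℝ => x^(1/q - 1/2)) atTop (nhds 0) := by
        have h := tendsto_rpow_neg_atTop hexp
        simpa [neg_sub] using h
      have h2 : Tendsto (fun N : ℕ => (N:ℝ)^(1/q - 1/2)) atTop (nhds 0) :=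
        h1.comp tendsto_natCast_atTop_atTop
      have h3 : Tendsto (fun N : ℕ =>
          6 * (I₀.toReal + 1) * 2^(d+2) * δ * (N:ℝ)^(1/q - 1/2)) atTop (nhds 0) := by
        simpa using h2.const_mul (6 * (I₀.toReal + 1) * 2^(d+2) * δ)
      simpa using ENNReal.tendsto_ofReal h3
    exact tendsto_of_tendsto_of_tendsto_of_le_of_le' tendsto_const_nhds hg
      (Eventually.of_forall fun N => zero_le) hub

end
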